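/- Fix 0 < p ≤ 2 and let ℝ_q be the free product of q copies of the additive group ℝ (q ∈ ℕ⁺ ∪ {∞}). Then for every t > 0, the function φ : ℝ_q → ℝ defined by φ(r) := e^{−t ‖r‖_p^p} is positive definite on ℝ_q. -/

import Mathlib

open ComplexOrder

/-- The `p`-th power ℓ^p length on the free product of copies of the additive group `ℝ`:
for a normal form `r = x₁ ⋯ x_n` (each `x_j` a nonzero real in one copy, consecutive
copies distinct), `‖r‖_p^p = ∑ j |x_j|^p`. -/
noncomputable def lppFree {ι : Type*} [DecidableEq ι] (p : ℝ)
    (g : Monoid.CoprodI (fun _ : ι => Multiplicative ℝ)) : ℝ :=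
  ((Monoid.CoprodI.Word.equiv g).toList.map
    (fun l => |Multiplicative.toAdd l.2| ^ p)).sum

/-- A real-valued function on a group is positive definite. -/
def IsPositiveDefinite {G : Type*} [Group G] (φ : G → ℝ) : Prop :=
  ∀ (n : ℕ) (x : Fin n → G) (c : Fin n → ℂ),
    0 ≤ ∑ j, ∑ k, c j * (starRingEnd ℂ) (c k) * (φ ((x j)⁻¹ * x k) : ℂ)

namespace BozejkoAux

open Finset Filter MeasureTheory Set

def PSD {n : ℕ} (M : Fin n → Fin n → ℝ) : Prop :=
  (∀ j k, M j k = M k j) ∧ ∀ c : Fin n → ℝ, 0 ≤ ∑ j, ∑ k, c j * c k * M j k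

variable {n : ℕ}

theorem PSD.congr {M N : Fin n → Fin n → ℝ} (h : PSD M) (e : ∀ j k, N j k = M j k) :
    PSD N := by
  have : N = M := funext fun j => funext fun k => e j k
  rwa [this]

theorem psd_rankOne (v : Fin n → ℝ) : PSD (fun j k => v j * v k) := by
  refine ⟨fun j k => mul_comm _ _, fun c => ?_⟩
  have h : (∑ j, c j * v j) * (∑ k, c k * v k) = ∑ j, ∑ k, c j * c k * (v j * v k) := by
    rw [Finset.sum_mul_sum]
    exact Finset.sum_congr rfl fun j _ => Finset.sum_congr rfl fun k _ => by ring
  rw [← h]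
  exact mul_self_nonneg _

theorem psd_ones : PSD (fun _ _ : Fin n => (1 : ℝ)) :=
  (psd_rankOne fun _ => 1).congr fun _ _ => (one_mul 1).symm

theorem PSD.add {M N : Fin n → Fin n → ℝ} (hM : PSD M) (hN : PSD N) :
    PSD (fun j k => M j k + N j k) := by
  refine ⟨fun j k => by dsimp only; rw [hM.1 j k, hN.1 j k], fun c => ?_⟩
  have : ∑ j, ∑ k, c j * c k * (M j k + N j k)
      = (∑ j, ∑ k, c j * c k * M j k) + ∑ j, ∑ k, c j * c k * N j k := by
    rw [← Finset.sum_add_distrib]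
    exact Finset.sum_congr rfl fun j _ => by
      rw [← Finset.sum_add_distrib]
      exact Finset.sum_congr rfl fun k _ => by ring
  rw [this]
  exact add_nonneg (hM.2 c) (hN.2 c)

theorem PSD.smul {M : Fin n → Fin n → ℝ} (hM : PSD M) {a : ℝ} (ha : 0 ≤ a) :
    PSD (fun j k => a * M j k) := by
  refine ⟨fun j k => by dsimp only; rw [hM.1 j k], fun c => ?_⟩
  have : ∑ j, ∑ k, c j * c k * (a * M j k) = a * ∑ j, ∑ k, c j * c k * M j k := by
    rw [Finset.mul_sum]
    exact Finset.sum_congr rfl fun j _ => by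
      rw [Finset.mul_sum]
      exact Finset.sum_congr rfl fun k _ => by ring
  rw [this]
  exact mul_nonneg ha (hM.2 c)

theorem psd_finsum {α : Type*} (s : Finset α) (F : α → Fin n → Fin n → ℝ)
    (hF : ∀ a ∈ s, PSD (F a)) : PSD (fun j k => ∑ a ∈ s, F a j k) := by
  classical
  induction s using Finset.induction_on with
  | empty =>
      refine ⟨fun j k => by simp, fun c => ?_⟩
      simp
  | @insert a s' hx ih =>
      have h1 : PSD (F a) := hF a (Finset.mem_insert_self _ _)
      have h2 : PSD (fun j k => ∑ b ∈ s', F b j k) :=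
        ih fun b hb => hF b (Finset.mem_insert_of_mem hb)
      exact (h1.add h2).congr fun j k => Finset.sum_insert hx

theorem PSD.schur {M N : Fin n → Fin n → ℝ} (hM : PSD M) (hN : PSD N) :
    PSD (fun j k => M j k * N j k) := by
  refine ⟨fun j k => by dsimp only; rw [hM.1 j k, hN.1 j k], fun c => ?_⟩
  -- decompose N via matrices
  have hN' : (Matrix.of N).PosSemidef := by
    rw [Matrix.posSemidef_iff_dotProduct_mulVec]
    constructor
    · ext j k
      simp only [Matrix.conjTranspose_apply, Matrix.of_apply, star_trivial]
      exact hN.1 k j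
    · intro x
      have hx : dotProduct (star x) ((Matrix.of N).mulVec x)
          = ∑ j, ∑ k, x j * x k * N j k := by
        simp only [dotProduct, Matrix.mulVec, Pi.star_apply, star_trivial,
          Matrix.of_apply, Finset.mul_sum]
        exact Finset.sum_congr rfl fun j _ => Finset.sum_congr rfl fun k _ => by ring
      rw [hx]
      exact hN.2 x
  obtain ⟨m, B, hB⟩ := Matrix.posSemidef_iff_eq_sum_vecMulVec.mp hN'
  have hNjk : ∀ j k, N j k = ∑ r, B r j * B r k := by
    intro j k
    have := congrArg (fun A => A j k) hB
    simpa [Matrix.vecMulVec_apply, Matrix.sum_apply] using this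
  have key : ∑ j, ∑ k, c j * c k * (M j k * N j k)
      = ∑ r, ∑ j, ∑ k, (c j * B r j) * (c k * B r k) * M j k := by
    have : ∀ j k : Fin n, c j * c k * (M j k * N j k)
        = ∑ r, (c j * B r j) * (c k * B r k) * M j k := by
      intro j k
      rw [hNjk j k, Finset.mul_sum, Finset.mul_sum]
      exact Finset.sum_congr rfl fun r _ => by ring
    calc ∑ j, ∑ k, c j * c k * (M j k * N j k)
        = ∑ j, ∑ k, ∑ r, (c j * B r j) * (c k * B r k) * M j k :=
          Finset.sum_congr rfl fun j _ => Finset.sum_congr rfl fun k _ => this j k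
      _ = ∑ j, ∑ r, ∑ k, (c j * B r j) * (c k * B r k) * M j k :=
          Finset.sum_congr rfl fun j _ => Finset.sum_comm
      _ = ∑ r, ∑ j, ∑ k, (c j * B r j) * (c k * B r k) * M j k := Finset.sum_comm
  rw [key]
  exact Finset.sum_nonneg fun r _ => hM.2 fun j => c j * B r j

theorem psd_pow {M : Fin n → Fin n → ℝ} (hM : PSD M) (m : ℕ) :
    PSD (fun j k => M j k ^ m) := by
  induction m with
  | zero => exact psd_ones.congr fun j k => pow_zero _
  | succ m ih => exact (ih.schur hM).congr fun j k => pow_succ _ _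

theorem psd_limit {F : ℕ → Fin n → Fin n → ℝ} {M : Fin n → Fin n → ℝ}
    (hF : ∀ m, PSD (F m))
    (hlim : ∀ j k, Tendsto (fun m => F m j k) atTop (nhds (M j k))) : PSD M := by
  constructor
  · intro j k
    have h2 := hlim k j
    have he : (fun m => F m k j) = fun m => F m j k :=
      funext fun m => ((hF m).1 j k).symm
    rw [he] at h2
    exact tendsto_nhds_unique (hlim j k) h2
  · intro c
    have ht : Tendsto (fun m => ∑ j, ∑ k, c j * c k * F m j k) atTop
        (nhds (∑ j, ∑ k, c j * c k * M j k)) :=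
      tendsto_finset_sum _ fun j _ => tendsto_finset_sum _ fun k _ =>
        ((hlim j k).const_mul _)
    exact ge_of_tendsto' ht fun m => (hF m).2 c

theorem PSD.exp {M : Fin n → Fin n → ℝ} (hM : PSD M) :
    PSD (fun j k => Real.exp (M j k)) := by
  have key : ∀ j k : Fin n, Tendsto (fun N => ∑ m ∈ Finset.range N, M j k ^ m / m.factorial)
      atTop (nhds (Real.exp (M j k))) := by
    intro j k
    have h1 := (Real.summable_pow_div_factorial (M j k)).hasSum.tendsto_sum_nat
    have h2 : ∑' m : ℕ, M j k ^ m / m.factorial = Real.exp (M j k) := by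
      rw [Real.exp_eq_exp_ℝ, NormedSpace.exp_eq_tsum_div]
    rwa [h2] at h1
  refine psd_limit (fun N => ?_) key
  refine (psd_finsum (Finset.range N) (fun m j k => (1 / m.factorial : ℝ) * M j k ^ m)
    (fun m _ => (psd_pow hM m).smul (by positivity))).congr fun j k => ?_
  exact Finset.sum_congr rfl fun m _ => by rw [one_div, inv_mul_eq_div]

theorem psd_diagMul {M : Fin n → Fin n → ℝ} (hM : PSD M) (d : Fin n → ℝ) :
    PSD (fun j k => d j * M j k * d k) :=
  ((psd_rankOne d).schur hM).congr fun j k => by ring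


open MeasureTheory Set

variable {p t : ℝ}

/-- continuity of the weight on positive reals -/
theorem contOn_weight (q : ℝ) (s : Set ℝ) (hs : s ⊆ {x : ℝ | x ≠ 0}) :
    ContinuousOn (fun ξ : ℝ => ξ ^ q) s := fun ξ hξ =>
  (Real.continuousAt_rpow_const ξ q (Or.inl (hs hξ))).continuousWithinAt

theorem integrableOn_Ioc_weight {a b q : ℝ} (ha : 0 < a) :
    IntegrableOn (fun ξ : ℝ => ξ ^ q) (Ioc a b) := by
  refine (ContinuousOn.integrableOn_Icc ?_).mono_set Ioc_subset_Icc_self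
  exact contOn_weight q _ (fun x hx => ne_of_gt (lt_of_lt_of_le ha hx.1))

theorem integrableOn_Ioc_cosweight {a b q u : ℝ} (ha : 0 < a) :
    IntegrableOn (fun ξ : ℝ => Real.cos (u * ξ) * ξ ^ q) (Ioc a b) := by
  refine (ContinuousOn.integrableOn_Icc ?_).mono_set Ioc_subset_Icc_self
  exact ((Real.continuous_cos.comp (continuous_const.mul continuous_id)).continuousOn).mul
    (contOn_weight q _ (fun x hx => ne_of_gt (lt_of_lt_of_le ha hx.1)))

theorem one_sub_cos_nonneg (x : ℝ) : 0 ≤ 1 - Real.cos x := by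
  have := Real.cos_le_one x; linarith

theorem one_sub_cos_le_two (x : ℝ) : 1 - Real.cos x ≤ 2 := by
  have := Real.neg_one_le_cos x; linarith

theorem one_sub_cos_le_sq (x : ℝ) : 1 - Real.cos x ≤ x ^ 2 / 2 := by
  have := Real.one_sub_sq_div_two_le_cos (x := x); linarith

/-- integrability of the full integrand on `(0, ∞)` -/
theorem integrableOn_main (hp0 : 0 < p) (hp2 : p < 2) (u : ℝ) :
    IntegrableOn (fun ξ : ℝ => (1 - Real.cos (u * ξ)) * ξ ^ (-1 - p)) (Ioi 0) := by
  have hcont : ContinuousOn (fun ξ : ℝ => (1 - Real.cos (u * ξ)) * ξ ^ (-1 - p)) (Ioi 0) :=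
    ((continuous_const.sub
      (Real.continuous_cos.comp (continuous_const.mul continuous_id))).continuousOn).mul
      (contOn_weight _ _ (fun x hx => ne_of_gt hx))
  rw [← Ioc_union_Ioi_eq_Ioi (zero_le_one : (0:ℝ) ≤ 1), integrableOn_union]
  constructor
  · -- on (0, 1]
    have hw : IntegrableOn (fun ξ : ℝ => ξ ^ (1 - p)) (Ioc (0:ℝ) 1) :=
      (intervalIntegral.intervalIntegrable_rpow' (by linarith : (-1:ℝ) < 1 - p)).1
    refine Integrable.mono' (hw.const_mul (u ^ 2 / 2))
      ((hcont.mono Ioc_subset_Ioi_self).aestronglyMeasurable measurableSet_Ioc) ?_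
    filter_upwards [ae_restrict_mem measurableSet_Ioc] with ξ hξ
    have hξ0 : 0 < ξ := hξ.1
    have h1 : 0 ≤ 1 - Real.cos (u * ξ) := one_sub_cos_nonneg _
    have h2 : 0 ≤ (ξ:ℝ) ^ (-1 - p) := Real.rpow_nonneg hξ0.le _
    rw [Real.norm_eq_abs, abs_of_nonneg (mul_nonneg h1 h2)]
    have key : (u * ξ) ^ 2 / 2 * ξ ^ (-1 - p) = u ^ 2 / 2 * ξ ^ (1 - p) := by
      have : (ξ:ℝ) ^ (2:ℝ) * ξ ^ (-1 - p) = ξ ^ (1 - p) := by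
        rw [← Real.rpow_add hξ0]; congr 1; ring
      rw [mul_pow]
      rw [show ((ξ:ℝ) ^ (2:ℕ) : ℝ) = ξ ^ (2:ℝ) by rw [← Real.rpow_natCast ξ 2]; norm_num]
      nlinarith [this]
    calc (1 - Real.cos (u * ξ)) * ξ ^ (-1 - p)
        ≤ (u * ξ) ^ 2 / 2 * ξ ^ (-1 - p) :=
          mul_le_mul_of_nonneg_right (one_sub_cos_le_sq _) h2
      _ = u ^ 2 / 2 * ξ ^ (1 - p) := key
  · -- on (1, ∞)
    have hw : IntegrableOn (fun ξ : ℝ => ξ ^ (-1 - p)) (Ioi (1:ℝ)) :=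
      integrableOn_Ioi_rpow_of_lt (by linarith) one_pos
    refine Integrable.mono' (hw.const_mul 2)
      ((hcont.mono (Ioi_subset_Ioi zero_le_one)).aestronglyMeasurable measurableSet_Ioi) ?_
    filter_upwards [ae_restrict_mem measurableSet_Ioi] with ξ hξ
    have hξ0 : (0:ℝ) < ξ := lt_trans one_pos hξ
    have h2 : 0 ≤ (ξ:ℝ) ^ (-1 - p) := Real.rpow_nonneg hξ0.le _
    rw [Real.norm_eq_abs, abs_of_nonneg (mul_nonneg (one_sub_cos_nonneg _) h2)]
    exact mul_le_mul_of_nonneg_right (one_sub_cos_le_two _) h2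

/-- the normalizing constant -/
noncomputable def Cp (p : ℝ) : ℝ := ∫ ξ in Ioi (0:ℝ), (1 - Real.cos ξ) * ξ ^ (-1 - p)

theorem Cp_pos (hp0 : 0 < p) (hp2 : p < 2) : 0 < Cp p := by
  have hint : IntegrableOn (fun ξ : ℝ => (1 - Real.cos ξ) * ξ ^ (-1 - p)) (Ioi 0) := by
    have := integrableOn_main hp0 hp2 1
    simpa only [one_mul] using this
  have hsub : Ioc (Real.pi / 2) Real.pi ⊆ Ioi (0:ℝ) := fun x hx =>
    lt_trans (by positivity) hx.1
  have hlow : Real.pi ^ (-1 - p) * (volume (Ioc (Real.pi / 2) Real.pi)).toReal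
      ≤ ∫ ξ in Ioc (Real.pi / 2) Real.pi, (1 - Real.cos ξ) * ξ ^ (-1 - p) := by
    refine setIntegral_ge_of_const_le_real measurableSet_Ioc (by simp) ?_
      (hint.mono_set hsub)
    intro ξ hξ
    have hξ0 : 0 < ξ := lt_trans (by positivity) hξ.1
    have hcos : Real.cos ξ ≤ 0 :=
      Real.cos_nonpos_of_pi_div_two_le_of_le hξ.1.le (by linarith [hξ.2, Real.pi_pos])
    have h1 : (1:ℝ) ≤ 1 - Real.cos ξ := by linarith
    have h2 : Real.pi ^ (-1 - p) ≤ ξ ^ (-1 - p) :=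
      Real.rpow_le_rpow_of_nonpos hξ0 hξ.2 (by linarith)
    calc Real.pi ^ (-1 - p) = 1 * Real.pi ^ (-1 - p) := (one_mul _).symm
      _ ≤ (1 - Real.cos ξ) * ξ ^ (-1 - p) :=
          mul_le_mul h1 h2 (Real.rpow_nonneg Real.pi_pos.le _)
            (by linarith [one_sub_cos_nonneg ξ])
  have hmono : ∫ ξ in Ioc (Real.pi / 2) Real.pi, (1 - Real.cos ξ) * ξ ^ (-1 - p)
      ≤ Cp p := by
    refine setIntegral_mono_set hint ?_ (HasSubset.Subset.eventuallyLE hsub)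
    filter_upwards [ae_restrict_mem measurableSet_Ioi] with ξ hξ
    exact mul_nonneg (one_sub_cos_nonneg _) (Real.rpow_nonneg (le_of_lt hξ) _)
  have hvol : (volume (Ioc (Real.pi / 2) Real.pi)).toReal = Real.pi / 2 := by
    rw [Real.volume_Ioc, ENNReal.toReal_ofReal (by linarith [Real.pi_pos])]
    ring
  have : 0 < Real.pi ^ (-1 - p) * (volume (Ioc (Real.pi / 2) Real.pi)).toReal := by
    rw [hvol]
    positivity
  linarith

theorem scaling (hp0 : 0 < p) (hp2 : p < 2) (u : ℝ) :
    ∫ ξ in Ioi (0:ℝ), (1 - Real.cos (u * ξ)) * ξ ^ (-1 - p) = |u| ^ p * Cp p := by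
  rcases eq_or_ne u 0 with rfl | hu
  · simp [Real.zero_rpow (ne_of_gt hp0)]
  · have ha : 0 < |u| := abs_pos.mpr hu
    have hcos : ∀ ξ : ℝ, Real.cos (u * ξ) = Real.cos (|u| * ξ) := by
      intro ξ
      rcases abs_choice u with h | h
      · rw [h]
      · rw [h, neg_mul, Real.cos_neg]
    have key := MeasureTheory.integral_comp_mul_left_Ioi
      (fun s : ℝ => (1 - Real.cos s) * s ^ (-1 - p)) 0 ha
    rw [mul_zero] at key
    have step1 : ∫ ξ in Ioi (0:ℝ), (1 - Real.cos (u * ξ)) * ξ ^ (-1 - p)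
        = ∫ ξ in Ioi (0:ℝ), |u| ^ (1 + p) * ((1 - Real.cos (|u| * ξ)) * (|u| * ξ) ^ (-1 - p)) := by
      refine setIntegral_congr_fun measurableSet_Ioi (fun ξ hξ => ?_)
      have hξ0 : (0:ℝ) < ξ := hξ
      rw [Real.mul_rpow ha.le hξ0.le, hcos]
      have : |u| ^ (1 + p) * |u| ^ (-1 - p) = 1 := by
        rw [← Real.rpow_add ha]; norm_num
      linear_combination (-(1 - Real.cos (|u| * ξ)) * ξ ^ (-1 - p)) * this
    rw [step1, MeasureTheory.integral_const_mul, key, smul_eq_mul]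
    have : |u| ^ (1 + p) * |u|⁻¹ = |u| ^ p := by
      rw [← Real.rpow_neg_one |u|, ← Real.rpow_add ha]
      norm_num
    rw [← mul_assoc, this, Cp]


theorem psd_cos {n : ℕ} (v : Fin n → ℝ) (ξ : ℝ) :
    PSD (fun j k => Real.cos ((v j - v k) * ξ)) := by
  refine ((psd_rankOne (fun j => Real.cos (v j * ξ))).add
    (psd_rankOne (fun j => Real.sin (v j * ξ)))).congr fun j k => ?_
  rw [sub_mul, Real.cos_sub]

theorem psd_cosInt {n : ℕ} (v : Fin n → ℝ) {a b : ℝ} (ha : 0 < a) (q : ℝ) :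
    PSD (fun j k => ∫ ξ in Ioc a b, Real.cos ((v j - v k) * ξ) * ξ ^ q) := by
  constructor
  · intro j k
    dsimp only
    have : (fun ξ : ℝ => Real.cos ((v j - v k) * ξ) * ξ ^ q)
        = fun ξ : ℝ => Real.cos ((v k - v j) * ξ) * ξ ^ q := by
      funext ξ
      rw [show v j - v k = -(v k - v j) by ring, neg_mul, Real.cos_neg]
    rw [this]
  · intro c
    have h1 : ∑ j, ∑ k, c j * c k * (∫ ξ in Ioc a b, Real.cos ((v j - v k) * ξ) * ξ ^ q)
        = ∫ ξ in Ioc a b, ∑ j, ∑ k, c j * c k * (Real.cos ((v j - v k) * ξ) * ξ ^ q) := by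
      calc ∑ j, ∑ k, c j * c k * (∫ ξ in Ioc a b, Real.cos ((v j - v k) * ξ) * ξ ^ q)
          = ∑ j, ∑ k, ∫ ξ in Ioc a b, c j * c k * (Real.cos ((v j - v k) * ξ) * ξ ^ q) :=
            Finset.sum_congr rfl fun j _ => Finset.sum_congr rfl fun k _ =>
              (MeasureTheory.integral_const_mul _ _).symm
        _ = ∑ j, ∫ ξ in Ioc a b, ∑ k, c j * c k * (Real.cos ((v j - v k) * ξ) * ξ ^ q) :=
            Finset.sum_congr rfl fun j _ =>
              (MeasureTheory.integral_finset_sum _ fun k _ =>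
                ((integrableOn_Ioc_cosweight ha).const_mul _)).symm
        _ = ∫ ξ in Ioc a b, ∑ j, ∑ k, c j * c k * (Real.cos ((v j - v k) * ξ) * ξ ^ q) :=
            (MeasureTheory.integral_finset_sum _ fun j _ =>
              (integrable_finset_sum _ fun k _ =>
                ((integrableOn_Ioc_cosweight ha).const_mul _))).symm
    rw [h1]
    refine setIntegral_nonneg measurableSet_Ioc fun ξ hξ => ?_
    have hw : 0 ≤ (ξ:ℝ) ^ q := Real.rpow_nonneg (le_of_lt (lt_trans ha hξ.1)) _
    have h2 : ∑ j, ∑ k, c j * c k * (Real.cos ((v j - v k) * ξ) * ξ ^ q)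
        = (∑ j, ∑ k, c j * c k * Real.cos ((v j - v k) * ξ)) * ξ ^ q := by
      rw [Finset.sum_mul]
      refine Finset.sum_congr rfl fun j _ => ?_
      rw [Finset.sum_mul]
      exact Finset.sum_congr rfl fun k _ => by ring
    rw [h2]
    exact mul_nonneg ((psd_cos v ξ).2 c) hw

theorem psd_exp_neg_abs_rpow (hp0 : 0 < p) (hp2 : p ≤ 2) (ht : 0 < t) {n : ℕ} (v : Fin n → ℝ) :
    PSD (fun j k => Real.exp (-t * |v j - v k| ^ p)) := by
  rcases eq_or_lt_of_le hp2 with rfl | hlt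
  · -- p = 2 : Gaussian case
    have habs : ∀ u : ℝ, |u| ^ (2:ℝ) = u ^ 2 := fun u => by
      rw [show (2:ℝ) = ((2:ℕ):ℝ) by norm_num, Real.rpow_natCast, sq_abs]
    refine (psd_diagMul (PSD.exp ((psd_rankOne v).smul (a := 2*t) (by positivity)))
      (fun j => Real.exp (-t * v j ^ 2))).congr fun j k => ?_
    rw [habs, ← Real.exp_add, ← Real.exp_add]
    congr 1
    ring
  · -- 0 < p < 2
    have hCpos := Cp_pos hp0 hlt
    refine psd_limit (F := fun m j k => Real.exp (-(t / Cp p) *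
        ∫ ξ in Ioc ((m:ℝ)+1)⁻¹ ((m:ℝ)+1), (1 - Real.cos ((v j - v k) * ξ)) * ξ ^ (-1 - p)))
      (fun m => ?_) (fun j k => ?_)
    · -- each truncated kernel is PSD
      have ha : (0:ℝ) < ((m:ℝ)+1)⁻¹ := by positivity
      have hsplit : ∀ u : ℝ,
          ∫ ξ in Ioc ((m:ℝ)+1)⁻¹ ((m:ℝ)+1), (1 - Real.cos (u * ξ)) * ξ ^ (-1 - p)
          = (∫ ξ in Ioc ((m:ℝ)+1)⁻¹ ((m:ℝ)+1), ξ ^ (-1 - p))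
            - ∫ ξ in Ioc ((m:ℝ)+1)⁻¹ ((m:ℝ)+1), Real.cos (u * ξ) * ξ ^ (-1 - p) := by
        intro u
        rw [← MeasureTheory.integral_sub (integrableOn_Ioc_weight ha)
          (integrableOn_Ioc_cosweight ha)]
        exact setIntegral_congr_fun measurableSet_Ioc fun ξ _ => by ring
      have hB := psd_cosInt v (b := ((m:ℝ)+1)) ha (-1 - p)
      refine (((hB.smul (show (0:ℝ) ≤ t / Cp p by positivity)).exp).smul
        (a := Real.exp (-(t / Cp p) * ∫ ξ in Ioc ((m:ℝ)+1)⁻¹ ((m:ℝ)+1), ξ ^ (-1 - p)))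
        (Real.exp_nonneg _)).congr fun j k => ?_
      rw [hsplit, ← Real.exp_add]
      congr 1
      ring
    · -- convergence to the Lévy integral
      have hs : ∀ m : ℕ, MeasurableSet (Ioc ((m:ℝ)+1)⁻¹ ((m:ℝ)+1)) :=
        fun m => measurableSet_Ioc
      have hmono : Monotone (fun m : ℕ => Ioc ((m:ℝ)+1)⁻¹ ((m:ℝ)+1)) := by
        intro m m' hmm
        have h1 : ((m:ℝ)+1) ≤ ((m':ℝ)+1) := by
          have := (Nat.cast_le (α := ℝ)).mpr hmm; linarith
        exact Ioc_subset_Ioc (by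
          exact inv_anti₀ (by positivity) h1) h1
      have hunion : (⋃ m : ℕ, Ioc ((m:ℝ)+1)⁻¹ ((m:ℝ)+1)) = Ioi (0:ℝ) := by
        ext ξ
        simp only [Set.mem_iUnion, Set.mem_Ioc, Set.mem_Ioi]
        constructor
        · rintro ⟨m, h1, _⟩
          exact lt_trans (by positivity) h1
        · intro hξ
          obtain ⟨m, hm⟩ := exists_nat_gt (max ξ⁻¹ ξ)
          have h1 : ξ⁻¹ < (m:ℝ) + 1 := lt_trans (lt_of_le_of_lt (le_max_left _ _) hm) (by linarith)
          have h2 : ξ ≤ (m:ℝ) + 1 := le_trans (le_of_lt (lt_of_le_of_lt (le_max_right _ _) hm)) (by linarith)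
          exact ⟨m, (inv_lt_comm₀ hξ (by positivity)).mp h1, h2⟩
      set u := v j - v k with hu
      have hT := tendsto_setIntegral_of_monotone hs hmono
        (f := fun ξ : ℝ => (1 - Real.cos (u * ξ)) * ξ ^ (-1 - p))
        (by rw [hunion]; exact integrableOn_main hp0 hlt u)
      rw [hunion, scaling hp0 hlt u] at hT
      have hT2 : Tendsto (fun m : ℕ => -(t / Cp p) *
          ∫ ξ in Ioc ((m:ℝ)+1)⁻¹ ((m:ℝ)+1), (1 - Real.cos (u * ξ)) * ξ ^ (-1 - p)) atTop
          (nhds (-(t / Cp p) * (|u| ^ p * Cp p))) := hT.const_mul _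
      have hT3 : Tendsto (fun m : ℕ => Real.exp (-(t / Cp p) *
          ∫ ξ in Ioc ((m:ℝ)+1)⁻¹ ((m:ℝ)+1), (1 - Real.cos (u * ξ)) * ξ ^ (-1 - p))) atTop
          (nhds (Real.exp (-(t / Cp p) * (|u| ^ p * Cp p)))) :=
        (Real.continuous_exp.continuousAt.tendsto).comp hT2
      have harg : -(t / Cp p) * (|u| ^ p * Cp p) = -t * |u| ^ p := by
        field_simp
      rw [harg] at hT3
      exact hT3

variable {ι : Type*} [DecidableEq ι]

abbrev Lam (ι : Type*) := Σ _i : ι, Multiplicative ℝ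

noncomputable def lpp (p : ℝ) (l : List (Lam ι)) : ℝ :=
  (l.map fun a => |Multiplicative.toAdd a.2| ^ p).sum

theorem lpp_nil (p : ℝ) : lpp p ([] : List (Lam ι)) = 0 := rfl

theorem lpp_cons (p : ℝ) (a : Lam ι) (l : List (Lam ι)) :
    lpp p (a :: l) = |Multiplicative.toAdd a.2| ^ p + lpp p l := by
  simp [lpp]

noncomputable def look : List (Lam ι) → List (Lam ι) × ι → ℝ
  | [], _ => 0
  | a :: _r, ([], i) => if a.1 = i then Multiplicative.toAdd a.2 else 0
  | a :: r, (b :: u, i) => if b = a then look r (u, i) else 0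

theorem look_nil (s : List (Lam ι) × ι) : look [] s = 0 := rfl

theorem look_cons_nil (a : Lam ι) (r : List (Lam ι)) (i : ι) :
    look (a :: r) ([], i) = if a.1 = i then Multiplicative.toAdd a.2 else 0 := rfl

theorem look_cons_cons (a b : Lam ι) (r u : List (Lam ι)) (i : ι) :
    look (a :: r) (b :: u, i) = if b = a then look r (u, i) else 0 := rfl

/-- the positions (prefix, summand index) of a list -/
def pos : List (Lam ι) → List (List (Lam ι) × ι)
  | [] => []
  | a :: r => ([], a.1) :: (pos r).map (fun s => (a :: s.1, s.2))

theorem look_shift (a : Lam ι) (r : List (Lam ι)) (s : List (Lam ι) × ι) :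
    look (a :: r) (a :: s.1, s.2) = look r s := by
  rw [look_cons_cons, if_pos rfl]

theorem look_shift_ne {a b : Lam ι} (hab : b ≠ a) (r : List (Lam ι)) (s : List (Lam ι) × ι) :
    look (a :: r) (b :: s.1, s.2) = 0 := by
  rw [look_cons_cons, if_neg hab]

theorem look_eq_zero_of_not_mem :
    ∀ (l : List (Lam ι)) (s : List (Lam ι) × ι), s ∉ pos l → look l s = 0 := by
  intro l
  induction l with
  | nil => intro s _; rfl
  | cons a r ih =>
      rintro ⟨u, i⟩ hs
      match u with
      | [] =>
          rw [look_cons_nil]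
          refine if_neg fun h => hs ?_
          rw [← h]
          exact List.mem_cons_self
      | b :: u' =>
          rw [look_cons_cons]
          by_cases hba : b = a
          · rw [if_pos hba]
            refine ih (u', i) fun hmem => hs ?_
            subst hba
            exact List.mem_cons_of_mem _ (List.mem_map.mpr ⟨(u', i), hmem, rfl⟩)
          · rw [if_neg hba]

theorem shift_injective (a : Lam ι) :
    Function.Injective (fun s : List (Lam ι) × ι => (a :: s.1, s.2)) := by
  rintro ⟨u, i⟩ ⟨u', i'⟩ h
  simp only [Prod.mk.injEq, List.cons.injEq] at h
  exact Prod.ext h.1.2 h.2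

theorem nil_not_mem_shift (a : Lam ι) (P : Finset (List (Lam ι) × ι)) (i : ι) :
    ([] , i) ∉ P.image (fun s => (a :: s.1, s.2)) := by
  intro h
  obtain ⟨s, _, hs⟩ := Finset.mem_image.mp h
  simp at hs

theorem pos_toFinset_cons (a : Lam ι) (r : List (Lam ι)) :
    (pos (a :: r)).toFinset
      = insert ([], a.1) ((pos r).toFinset.image (fun s => (a :: s.1, s.2))) := by
  ext x
  simp [pos]

theorem sum_shift (a : Lam ι) (P : Finset (List (Lam ι) × ι)) (G : List (Lam ι) × ι → ℝ) :
    ∑ s ∈ P.image (fun s => (a :: s.1, s.2)), G s = ∑ s ∈ P, G (a :: s.1, s.2) :=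
  Finset.sum_image fun x _ y _ h => shift_injective a h

theorem sum_abs_look (p : ℝ) :
    ∀ l : List (Lam ι), ∑ s ∈ (pos l).toFinset, |look l s| ^ p = lpp p l := by
  intro l
  induction l with
  | nil => simp [pos, lpp]
  | cons a r ih =>
      rw [pos_toFinset_cons, Finset.sum_insert (nil_not_mem_shift a _ _), sum_shift]
      have h1 : look (a :: r) ([], a.1) = Multiplicative.toAdd a.2 := by
        rw [look_cons_nil, if_pos rfl]
      have h2 : ∀ s ∈ (pos r).toFinset, |look (a :: r) (a :: s.1, s.2)| ^ p = |look r s| ^ p :=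
        fun s _ => by rw [look_shift]
      rw [h1, Finset.sum_congr rfl h2, ih, lpp_cons]


noncomputable def dSum (p : ℝ) : List (Lam ι) → List (Lam ι) → ℝ
  | [], l₂ => lpp p l₂
  | a :: r₁, [] => lpp p (a :: r₁)
  | a :: r₁, b :: r₂ =>
      if a = b then dSum p r₁ r₂
      else if a.1 = b.1 then
        |Multiplicative.toAdd a.2 - Multiplicative.toAdd b.2| ^ p + lpp p r₁ + lpp p r₂
      else lpp p (a :: r₁) + lpp p (b :: r₂)

theorem mem_shift_head {a : Lam ι} {P : Finset (List (Lam ι) × ι)}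
    {s : List (Lam ι) × ι} (h : s ∈ P.image (fun x => (a :: x.1, x.2))) :
    ∃ u i, s = (a :: u, i) := by
  obtain ⟨x, _, hx⟩ := Finset.mem_image.mp h
  exact ⟨x.1, x.2, hx.symm⟩

theorem sum_lookU (p : ℝ) (hp : 0 < p) :
    ∀ l₁ l₂ : List (Lam ι),
      ∑ s ∈ (pos l₁).toFinset ∪ (pos l₂).toFinset, |look l₁ s - look l₂ s| ^ p
        = dSum p l₁ l₂ := by
  intro l₁
  induction l₁ with
  | nil =>
      intro l₂
      have : ∀ s ∈ (pos l₂).toFinset, |look ([] : List (Lam ι)) s - look l₂ s| ^ p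
          = |look l₂ s| ^ p := fun s _ => by rw [look_nil, zero_sub, abs_neg]
      simp only [pos, List.toFinset_nil, Finset.empty_union, dSum]
      rw [Finset.sum_congr rfl this, sum_abs_look]
  | cons a r₁ ih =>
      intro l₂
      match l₂ with
      | [] =>
          have : ∀ s ∈ (pos (a :: r₁)).toFinset, |look (a :: r₁) s - look [] s| ^ p
              = |look (a :: r₁) s| ^ p := fun s _ => by rw [look_nil, sub_zero]
          rw [show ((pos ([] : List (Lam ι))).toFinset : Finset (List (Lam ι) × ι)) = ∅ by
              simp [pos],
            Finset.union_empty, Finset.sum_congr rfl this, sum_abs_look]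
          rfl
      | b :: r₂ =>
          by_cases hab : a = b
          · -- identical heads
            subst hab
            rw [pos_toFinset_cons, pos_toFinset_cons,
              Finset.insert_union, Finset.union_insert, Finset.insert_idem,
              ← Finset.image_union]
            rw [Finset.sum_insert (nil_not_mem_shift a _ _), sum_shift]
            have hterm : |look (a :: r₁) ([], a.1) - look (a :: r₂) ([], a.1)| ^ p = 0 := by
              rw [look_cons_nil, look_cons_nil]
              simp [Real.zero_rpow (ne_of_gt hp)]
            have hbody : ∀ s ∈ (pos r₁).toFinset ∪ (pos r₂).toFinset,
                |look (a :: r₁) (a :: s.1, s.2) - look (a :: r₂) (a :: s.1, s.2)| ^ p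
                = |look r₁ s - look r₂ s| ^ p := fun s _ => by rw [look_shift, look_shift]
            rw [hterm, Finset.sum_congr rfl hbody, ih r₂, zero_add]
            show _ = dSum p (a :: r₁) (a :: r₂)
            simp [dSum]
          · -- distinct heads
            have hdisj : Disjoint ((pos r₁).toFinset.image (fun s => (a :: s.1, s.2)))
                ((pos r₂).toFinset.image (fun s => (b :: s.1, s.2))) := by
              rw [Finset.disjoint_left]
              intro s hs1 hs2
              obtain ⟨u, i, rfl⟩ := mem_shift_head hs1
              obtain ⟨u', i', he⟩ := mem_shift_head hs2
              simp only [Prod.mk.injEq, List.cons.injEq] at he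
              exact hab he.1.1
            have hsum1 : ∑ s ∈ (pos r₁).toFinset.image (fun s => (a :: s.1, s.2)),
                |look (a :: r₁) s - look (b :: r₂) s| ^ p = lpp p r₁ := by
              rw [sum_shift]
              have : ∀ s ∈ (pos r₁).toFinset,
                  |look (a :: r₁) (a :: s.1, s.2) - look (b :: r₂) (a :: s.1, s.2)| ^ p
                  = |look r₁ s| ^ p := fun s _ => by
                rw [look_shift, look_shift_ne hab, sub_zero]
              rw [Finset.sum_congr rfl this, sum_abs_look]
            have hsum2 : ∑ s ∈ (pos r₂).toFinset.image (fun s => (b :: s.1, s.2)),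
                |look (a :: r₁) s - look (b :: r₂) s| ^ p = lpp p r₂ := by
              rw [sum_shift]
              have : ∀ s ∈ (pos r₂).toFinset,
                  |look (a :: r₁) (b :: s.1, s.2) - look (b :: r₂) (b :: s.1, s.2)| ^ p
                  = |look r₂ s| ^ p := fun s _ => by
                rw [look_shift, look_shift_ne (fun h => hab h.symm), zero_sub, abs_neg]
              rw [Finset.sum_congr rfl this, sum_abs_look]
            by_cases hi : a.1 = b.1
            · -- same summand, different letters
              rw [pos_toFinset_cons, pos_toFinset_cons, ← hi,
                Finset.insert_union, Finset.union_insert, Finset.insert_idem]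
              rw [Finset.sum_insert (by
                intro hmem
                rcases Finset.mem_union.mp hmem with h | h
                · exact nil_not_mem_shift a _ _ h
                · exact nil_not_mem_shift b _ _ h)]
              rw [Finset.sum_union hdisj, hsum1, hsum2]
              have hterm : |look (a :: r₁) ([], a.1) - look (b :: r₂) ([], a.1)| ^ p
                  = |Multiplicative.toAdd a.2 - Multiplicative.toAdd b.2| ^ p := by
                rw [look_cons_nil, look_cons_nil, if_pos rfl, if_pos hi.symm]
              rw [hterm]
              show _ = dSum p (a :: r₁) (b :: r₂)
              rw [show dSum p (a :: r₁) (b :: r₂)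
                  = |Multiplicative.toAdd a.2 - Multiplicative.toAdd b.2| ^ p
                    + lpp p r₁ + lpp p r₂ by simp [dSum, hab, hi]]
              ring
            · -- different summands
              rw [pos_toFinset_cons, pos_toFinset_cons,
                Finset.insert_union, Finset.union_insert]
              have hne : (([] : List (Lam ι)), a.1) ≠ (([] : List (Lam ι)), b.1) := by
                simp [hi]
              rw [Finset.sum_insert (by
                intro hmem
                rcases Finset.mem_insert.mp hmem with h | h
                · exact hne h
                · rcases Finset.mem_union.mp h with h' | h'
                  · exact nil_not_mem_shift a _ _ h'
                  · exact nil_not_mem_shift b _ _ h')]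
              rw [Finset.sum_insert (by
                intro hmem
                rcases Finset.mem_union.mp hmem with h' | h'
                · exact nil_not_mem_shift a _ _ h'
                · exact nil_not_mem_shift b _ _ h')]
              rw [Finset.sum_union hdisj, hsum1, hsum2]
              have hterm1 : |look (a :: r₁) ([], a.1) - look (b :: r₂) ([], a.1)| ^ p
                  = |Multiplicative.toAdd a.2| ^ p := by
                rw [look_cons_nil, look_cons_nil, if_pos rfl, if_neg (fun h => hi h.symm),
                  sub_zero]
              have hterm2 : |look (a :: r₁) ([], b.1) - look (b :: r₂) ([], b.1)| ^ p
                  = |Multiplicative.toAdd b.2| ^ p := by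
                rw [look_cons_nil, look_cons_nil, if_pos rfl, if_neg hi, zero_sub, abs_neg]
              rw [hterm1, hterm2]
              show _ = dSum p (a :: r₁) (b :: r₂)
              rw [show dSum p (a :: r₁) (b :: r₂) = lpp p (a :: r₁) + lpp p (b :: r₂) by
                simp [dSum, hab, hi]]
              rw [lpp_cons, lpp_cons]
              ring

theorem sum_look (p : ℝ) (hp : 0 < p) (l₁ l₂ : List (Lam ι))
    (S : Finset (List (Lam ι) × ι))
    (hS : (pos l₁).toFinset ∪ (pos l₂).toFinset ⊆ S) :
    ∑ s ∈ S, |look l₁ s - look l₂ s| ^ p = dSum p l₁ l₂ := by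
  rw [← sum_lookU p hp l₁ l₂]
  refine (Finset.sum_subset hS fun s _ hnot => ?_).symm
  have h1 : look l₁ s = 0 := look_eq_zero_of_not_mem l₁ s fun h => hnot
    (Finset.mem_union_left _ (List.mem_toFinset.mpr h))
  have h2 : look l₂ s = 0 := look_eq_zero_of_not_mem l₂ s fun h => hnot
    (Finset.mem_union_right _ (List.mem_toFinset.mpr h))
  rw [h1, h2, sub_zero, abs_zero, Real.zero_rpow (ne_of_gt hp)]

noncomputable def prodList (l : List (Lam ι)) : Monoid.CoprodI (fun _ : ι => Multiplicative ℝ) :=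
  (l.map fun a => Monoid.CoprodI.of (M := fun _ : ι => Multiplicative ℝ) (i := a.1) a.2).prod

def Ok (l : List (Lam ι)) : Prop :=
  (∀ a ∈ l, a.2 ≠ 1) ∧ l.Chain' (fun a b => a.1 ≠ b.1)

noncomputable def mkWord (l : List (Lam ι)) (h : Ok l) :
    Monoid.CoprodI.Word (fun _ : ι => Multiplicative ℝ) :=
  ⟨l, h.1, h.2⟩

theorem mkWord_prod (l : List (Lam ι)) (h : Ok l) :
    (mkWord l h).prod = prodList l := rfl

theorem equiv_prodList (l : List (Lam ι)) (h : Ok l) :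
    Monoid.CoprodI.Word.equiv (prodList l) = mkWord l h := by
  rw [← mkWord_prod l h]
  exact (Monoid.CoprodI.Word.equiv).apply_symm_apply (mkWord l h)

theorem lppFree_prodList (p : ℝ) (l : List (Lam ι)) (h : Ok l) :
    lppFree p (prodList l) = lpp p l := by
  rw [lppFree, equiv_prodList l h]
  rfl

theorem prodList_nil : prodList ([] : List (Lam ι)) = 1 := rfl

theorem prodList_cons (a : Lam ι) (l : List (Lam ι)) :
    prodList (a :: l) = Monoid.CoprodI.of (M := fun _ : ι => Multiplicative ℝ) (i := a.1) a.2
      * prodList l := by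
  simp [prodList]

theorem prodList_append (l₁ l₂ : List (Lam ι)) :
    prodList (l₁ ++ l₂) = prodList l₁ * prodList l₂ := by
  simp [prodList]


def invL (l : List (Lam ι)) : List (Lam ι) :=
  (l.map fun a => (⟨a.1, a.2⁻¹⟩ : Lam ι)).reverse

theorem invL_nil : invL ([] : List (Lam ι)) = [] := rfl

theorem invL_cons (a : Lam ι) (l : List (Lam ι)) :
    invL (a :: l) = invL l ++ [⟨a.1, a.2⁻¹⟩] := by
  simp [invL]

theorem prodList_invL (l : List (Lam ι)) : prodList (invL l) = (prodList l)⁻¹ := by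
  induction l with
  | nil => simp [invL_nil, prodList_nil]
  | cons a l ih =>
      have h1 : prodList [(⟨a.1, a.2⁻¹⟩ : Lam ι)]
          = (Monoid.CoprodI.of (M := fun _ : ι => Multiplicative ℝ) (i := a.1) a.2)⁻¹ := by
        rw [← map_inv]
        simp [prodList]
      rw [invL_cons, prodList_append, ih, h1, prodList_cons, mul_inv_rev]

theorem lpp_append (p : ℝ) (l₁ l₂ : List (Lam ι)) :
    lpp p (l₁ ++ l₂) = lpp p l₁ + lpp p l₂ := by simp [lpp]

theorem lpp_invL (p : ℝ) (l : List (Lam ι)) : lpp p (invL l) = lpp p l := by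
  induction l with
  | nil => rfl
  | cons a l ih =>
      rw [invL_cons, lpp_append, ih, lpp_cons]
      simp [lpp, abs_neg]
      ring

theorem ok_tail {a : Lam ι} {l : List (Lam ι)} (h : Ok (a :: l)) : Ok l :=
  ⟨fun b hb => h.1 b (List.mem_cons_of_mem _ hb), h.2.tail⟩

theorem ok_invL {l : List (Lam ι)} (h : Ok l) : Ok (invL l) := by
  constructor
  · intro a ha
    rw [invL, List.mem_reverse, List.mem_map] at ha
    obtain ⟨b, hb, rfl⟩ := ha
    simpa [inv_eq_one] using h.1 b hb
  · unfold List.Chain'; rw [invL, List.isChain_reverse, List.isChain_map]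
    exact h.2.imp fun {a b} hne => fun hh => hne hh.symm

theorem head_invL (l : List (Lam ι)) :
    (invL l).getLast? = l.head?.map (fun a => (⟨a.1, a.2⁻¹⟩ : Lam ι)) := by
  rw [invL, List.getLast?_reverse, List.head?_map]

/-- Case of no middle cancellation: the reduced word of `l₁⁻¹ l₂` is `invL l₁ ++ l₂`. -/
theorem lppFree_join (p : ℝ) {l₁ l₂ : List (Lam ι)} (h₁ : Ok l₁) (h₂ : Ok l₂)
    (hj : ∀ a ∈ l₁.head?, ∀ b ∈ l₂.head?, a.1 ≠ b.1) :
    lppFree p ((prodList l₁)⁻¹ * prodList l₂) = lpp p l₁ + lpp p l₂ := by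
  have hok : Ok (invL l₁ ++ l₂) := by
    constructor
    · intro a ha
      rcases List.mem_append.mp ha with h | h
      · exact (ok_invL h₁).1 a h
      · exact h₂.1 a h
    · unfold List.Chain'; rw [List.isChain_append]
      refine ⟨(ok_invL h₁).2, h₂.2, ?_⟩
      intro x hx y hy
      rw [head_invL] at hx
      cases hl : l₁.head? with
      | none => rw [hl] at hx; simp at hx
      | some a =>
          rw [hl] at hx
          simp only [Option.map_some, Option.mem_def, Option.some.injEq] at hx
          rw [← hx]
          exact hj a (Option.mem_def.mpr hl) y hy
  have hprod : prodList (invL l₁ ++ l₂) = (prodList l₁)⁻¹ * prodList l₂ := by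
    rw [prodList_append, prodList_invL]
  rw [← hprod, show lppFree p (prodList (invL l₁ ++ l₂)) = lpp p (invL l₁ ++ l₂) from
    lppFree_prodList p _ hok, lpp_append, lpp_invL]

/-- Middle-merge case. -/
theorem lppFree_merge (p : ℝ) (i : ι) (x y : Multiplicative ℝ) (hxy : x ≠ y)
    {r₁ r₂ : List (Lam ι)} (h₁ : Ok (⟨i, x⟩ :: r₁)) (h₂ : Ok (⟨i, y⟩ :: r₂)) :
    lppFree p ((prodList (⟨i, x⟩ :: r₁))⁻¹ * prodList (⟨i, y⟩ :: r₂))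
      = lpp p r₁ + |Multiplicative.toAdd x - Multiplicative.toAdd y| ^ p + lpp p r₂ := by
  have hne1 : x⁻¹ * y ≠ 1 := fun h => hxy (by
    have := congrArg (fun z => x * z) h
    simpa [mul_assoc] using this.symm)
  have hok : Ok (invL r₁ ++ (⟨i, x⁻¹ * y⟩ :: r₂)) := by
    constructor
    · intro a ha
      rcases List.mem_append.mp ha with h | h
      · exact (ok_invL (ok_tail h₁)).1 a h
      · rcases List.mem_cons.mp h with h | h
        · rw [h]; exact hne1
        · exact (ok_tail h₂).1 a h
    · unfold List.Chain'; rw [List.isChain_append]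
      refine ⟨(ok_invL (ok_tail h₁)).2, ?_, ?_⟩
      · refine List.isChain_cons.mpr ⟨?_, (ok_tail h₂).2⟩
        intro b hb
        have := h₂.2
        unfold List.Chain' at this; rw [List.isChain_cons] at this
        exact this.1 b hb
      · intro a ha b hb
        simp only [List.head?_cons, Option.mem_def, Option.some.injEq] at hb
        subst hb
        rw [head_invL] at ha
        have := h₁.2
        unfold List.Chain' at this; rw [List.isChain_cons] at this
        cases hr : r₁.head? with
        | none => rw [hr] at ha; simp at ha
        | some c =>
            rw [hr] at ha
            simp only [Option.map_some, Option.mem_def,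
              Option.some.injEq] at ha
            rw [← ha]
            exact fun hh => (this.1 c (Option.mem_def.mpr hr)) hh.symm
  have hprod : prodList (invL r₁ ++ (⟨i, x⁻¹ * y⟩ :: r₂))
      = (prodList (⟨i, x⟩ :: r₁))⁻¹ * prodList (⟨i, y⟩ :: r₂) := by
    rw [prodList_append, prodList_invL, prodList_cons, prodList_cons, prodList_cons]
    rw [show Monoid.CoprodI.of (M := fun _ : ι => Multiplicative ℝ) (i := i) (x⁻¹ * y)
        = (Monoid.CoprodI.of (M := fun _ : ι => Multiplicative ℝ) (i := i) x)⁻¹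
          * Monoid.CoprodI.of (M := fun _ : ι => Multiplicative ℝ) (i := i) y by
      rw [map_mul, map_inv]]
    rw [show prodList (r₂ : List (Lam ι)) = prodList r₂ from rfl]
    group
  rw [← hprod, show lppFree p (prodList (invL r₁ ++ (⟨i, x⁻¹ * y⟩ :: r₂)))
      = lpp p (invL r₁ ++ (⟨i, x⁻¹ * y⟩ :: r₂)) from lppFree_prodList p _ hok,
    lpp_append, lpp_invL, lpp_cons]
  have : |Multiplicative.toAdd (x⁻¹ * y)| = |Multiplicative.toAdd x - Multiplicative.toAdd y| := by
    rw [show Multiplicative.toAdd (x⁻¹ * y) = -Multiplicative.toAdd x + Multiplicative.toAdd y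
      from rfl, show -Multiplicative.toAdd x + Multiplicative.toAdd y
      = -(Multiplicative.toAdd x - Multiplicative.toAdd y) by ring, abs_neg]
  rw [this]
  ring


theorem psd_finprod {n : ℕ} {α : Type*} (s : Finset α) (F : α → Fin n → Fin n → ℝ)
    (hF : ∀ a ∈ s, PSD (F a)) : PSD (fun j k => ∏ a ∈ s, F a j k) := by
  classical
  induction s using Finset.induction_on with
  | empty => exact psd_ones.congr fun j k => by simp
  | @insert a s' hx ih =>
      have h1 : PSD (F a) := hF a (Finset.mem_insert_self _ _)
      have h2 : PSD (fun j k => ∏ b ∈ s', F b j k) :=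
        ih fun b hb => hF b (Finset.mem_insert_of_mem hb)
      exact (h1.schur h2).congr fun j k => Finset.prod_insert hx

theorem dSum_eq (p : ℝ) :
    ∀ l₁ l₂ : List (Lam ι), Ok l₁ → Ok l₂ →
      dSum p l₁ l₂ = lppFree p ((prodList l₁)⁻¹ * prodList l₂) := by
  intro l₁
  induction l₁ with
  | nil =>
      intro l₂ _ h₂
      rw [show dSum p ([] : List (Lam ι)) l₂ = lpp p l₂ from rfl,
        prodList_nil, inv_one, one_mul, lppFree_prodList p l₂ h₂]
  | cons a r₁ ih =>
      intro l₂ h₁ h₂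
      match l₂ with
      | [] =>
          have hj : ∀ a' ∈ (a :: r₁).head?, ∀ b ∈ ([] : List (Lam ι)).head?, a'.1 ≠ b.1 := by
            intro a' _ b hb
            simp at hb
          rw [show dSum p (a :: r₁) ([] : List (Lam ι)) = lpp p (a :: r₁) from rfl,
            lppFree_join p h₁ ⟨by simp, List.isChain_nil⟩ hj, lpp_nil, add_zero]
      | b :: r₂ =>
          by_cases hab : a = b
          · subst hab
            have hg : (prodList (a :: r₁))⁻¹ * prodList (a :: r₂)
                = (prodList r₁)⁻¹ * prodList r₂ := by
              rw [prodList_cons, prodList_cons, mul_inv_rev]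
              group
            rw [show dSum p (a :: r₁) (a :: r₂) = dSum p r₁ r₂ by simp [dSum], hg]
            exact ih r₂ (ok_tail h₁) (ok_tail h₂)
          · by_cases hi : a.1 = b.1
            · obtain ⟨i, x⟩ := a
              obtain ⟨i', y⟩ := b
              dsimp only at hi
              subst hi
              have hxy : x ≠ y := fun h => hab (by rw [h])
              rw [show dSum p (⟨i, x⟩ :: r₁) (⟨i, y⟩ :: r₂)
                  = |Multiplicative.toAdd x - Multiplicative.toAdd y| ^ p
                    + lpp p r₁ + lpp p r₂ by simp [dSum, hab],
                lppFree_merge p i x y hxy h₁ h₂]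
              ring
            · have hj : ∀ a' ∈ (a :: r₁).head?, ∀ b' ∈ (b :: r₂).head?, a'.1 ≠ b'.1 := by
                intro a' ha' b' hb'
                simp only [List.head?_cons, Option.mem_def, Option.some.injEq] at ha' hb'
                rw [ha', hb'] at hi
                exact hi
              rw [show dSum p (a :: r₁) (b :: r₂) = lpp p (a :: r₁) + lpp p (b :: r₂) by
                  simp [dSum, hab, hi],
                lppFree_join p h₁ h₂ hj]

end BozejkoAux

/-- (Bożejko) For `0 < p ≤ 2` and every `t > 0`, the function `r ↦ e^{−t‖r‖_p^p}` is
positive definite on the free product `ℝ_q` of `q` copies of `ℝ`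
(`q` a positive natural number or countably infinite). -/
theorem exp_neg_lppFree_posDef
    {ι : Type*} [DecidableEq ι] [Countable ι] [Nonempty ι]
    (p : ℝ) (hp0 : 0 < p) (hp2 : p ≤ 2) (t : ℝ) (ht : 0 < t) :
    IsPositiveDefinite
      (fun r : Monoid.CoprodI (fun _ : ι => Multiplicative ℝ) =>
        Real.exp (-t * lppFree p r)) := by
  classical
  intro n x c
  open BozejkoAux in
  show 0 ≤ ∑ j, ∑ k, c j * (starRingEnd ℂ) (c k)
    * ((Real.exp (-t * lppFree p ((x j)⁻¹ * x k)) : ℝ) : ℂ)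
  set L : Fin n → List (BozejkoAux.Lam ι) :=
    fun j => (Monoid.CoprodI.Word.equiv (x j)).toList with hLdef
  have hOk : ∀ j, BozejkoAux.Ok (L j) := fun j =>
    ⟨(Monoid.CoprodI.Word.equiv (x j)).ne_one, (Monoid.CoprodI.Word.equiv (x j)).chain_ne⟩
  have hxL : ∀ j, BozejkoAux.prodList (L j) = x j := by
    intro j
    have h0 : BozejkoAux.prodList (L j) = (Monoid.CoprodI.Word.equiv (x j)).prod := rfl
    rw [h0]
    exact (Monoid.CoprodI.Word.equiv).symm_apply_apply (x j)
  set S : Finset (List (BozejkoAux.Lam ι) × ι) :=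
    Finset.univ.biUnion (fun j => (BozejkoAux.pos (L j)).toFinset) with hSdef
  have hkey : ∀ j k : Fin n, lppFree p ((x j)⁻¹ * x k)
      = ∑ s ∈ S, |BozejkoAux.look (L j) s - BozejkoAux.look (L k) s| ^ p := by
    intro j k
    have hsub : (BozejkoAux.pos (L j)).toFinset ∪ (BozejkoAux.pos (L k)).toFinset ⊆ S := by
      intro s hs
      rcases Finset.mem_union.mp hs with h | h
      · exact Finset.mem_biUnion.mpr ⟨j, Finset.mem_univ _, h⟩
      · exact Finset.mem_biUnion.mpr ⟨k, Finset.mem_univ _, h⟩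
    rw [BozejkoAux.sum_look p hp0 (L j) (L k) S hsub,
      BozejkoAux.dSum_eq p (L j) (L k) (hOk j) (hOk k), hxL j, hxL k]
  set M : Fin n → Fin n → ℝ :=
    fun j k => Real.exp (-t * lppFree p ((x j)⁻¹ * x k)) with hMdef
  have hPSD : BozejkoAux.PSD M := by
    refine (BozejkoAux.psd_finprod S (fun s j k =>
        Real.exp (-t * |BozejkoAux.look (L j) s - BozejkoAux.look (L k) s| ^ p))
      (fun s _ => BozejkoAux.psd_exp_neg_abs_rpow hp0 hp2 ht
        (fun j => BozejkoAux.look (L j) s))).congr fun j k => ?_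
    rw [hMdef]
    dsimp only
    rw [hkey j k, Finset.mul_sum, Real.exp_sum]
  set a : Fin n → ℝ := fun j => (c j).re with hadef
  set b : Fin n → ℝ := fun j => (c j).im with hbdef
  refine Complex.le_def.mpr ⟨?_, ?_⟩
  · -- real part
    have hre : (∑ j, ∑ k, c j * (starRingEnd ℂ) (c k) * ((M j k : ℝ) : ℂ)).re
        = ∑ j, ∑ k, ((a j * a k) * M j k + (b j * b k) * M j k) := by
      rw [Complex.re_sum]
      refine Finset.sum_congr rfl fun j _ => ?_
      rw [Complex.re_sum]
      refine Finset.sum_congr rfl fun k _ => ?_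
      simp only [Complex.mul_re, Complex.mul_im, Complex.conj_re, Complex.conj_im,
        Complex.ofReal_re, Complex.ofReal_im, RingHom.coe_coe]
      ring
    rw [Complex.zero_re, hre]
    have hsplit : ∑ j, ∑ k, ((a j * a k) * M j k + (b j * b k) * M j k)
        = (∑ j, ∑ k, a j * a k * M j k) + ∑ j, ∑ k, b j * b k * M j k := by
      rw [← Finset.sum_add_distrib]
      exact Finset.sum_congr rfl fun j _ => by rw [← Finset.sum_add_distrib]
    rw [hsplit]
    exact add_nonneg (hPSD.2 a) (hPSD.2 b)
  · -- imaginary part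
    have him : (∑ j, ∑ k, c j * (starRingEnd ℂ) (c k) * ((M j k : ℝ) : ℂ)).im
        = ∑ j, ∑ k, ((b j * a k) * M j k - (a j * b k) * M j k) := by
      rw [Complex.im_sum]
      refine Finset.sum_congr rfl fun j _ => ?_
      rw [Complex.im_sum]
      refine Finset.sum_congr rfl fun k _ => ?_
      simp only [Complex.mul_re, Complex.mul_im, Complex.conj_re, Complex.conj_im,
        Complex.ofReal_re, Complex.ofReal_im, RingHom.coe_coe]
      ring
    rw [Complex.zero_im, him]
    have h1 : ∑ j, ∑ k, (b j * a k) * M j k = ∑ j, ∑ k, (a j * b k) * M j k := by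
      rw [Finset.sum_comm]
      refine Finset.sum_congr rfl fun u _ => Finset.sum_congr rfl fun w _ => ?_
      rw [hPSD.1 w u]
      ring
    have h2 : ∑ j, ∑ k, ((b j * a k) * M j k - (a j * b k) * M j k)
        = (∑ j, ∑ k, (b j * a k) * M j k) - ∑ j, ∑ k, (a j * b k) * M j k := by
      rw [← Finset.sum_sub_distrib]
      exact Finset.sum_congr rfl fun j _ => by rw [← Finset.sum_sub_distrib]
    rw [h2, h1, sub_self]
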